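/- Let p be a prime with p ≡ 5 (mod 6) and let k be a field of characteristic p. In k[X₁,X₂,X₃,X₄], let κ = X₂²X₄² − 4X₁X₃X₄² + 4X₁³X₄ − 4X₃³X₄ + 4X₁²X₃² − 8X₁X₂²X₃ + 4X₂⁴. Then the coefficient of X₁^{p−2}X₃^{2p−1}X₄^{p−1} in κ^{p−1} equals −4^{2p−2} in k, and the coefficient of X₁^{2p−1}X₃^{p−2}X₄^{p−1} in κ^{p−1} also equals −4^{2p−2} in k. -/

import Mathlib

open MvPolynomial

noncomputable section Stmt4

/-- Exponent vector `(i₁,i₂,i₃,i₄)` for the variables `X₁,X₂,X₃,X₄`. -/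
def expv (i1 i2 i3 i4 : ℕ) : Fin 4 →₀ ℕ := Finsupp.equivFunOnFinite.symm ![i1, i2, i3, i4]

variable (k : Type*) [Field k]

/-- The Kummer quartic surface `κ` of the genus-2 curve `z² = x⁶ − 1`, in the variables
`X₁ = X 0, X₂ = X 1, X₃ = X 2, X₄ = X 3` over `k`. -/
def kappaK : MvPolynomial (Fin 4) k :=
  X 1 ^ 2 * X 3 ^ 2 - 4 * X 0 * X 2 * X 3 ^ 2 + 4 * X 0 ^ 3 * X 3 - 4 * X 2 ^ 3 * X 3
    + 4 * X 0 ^ 2 * X 2 ^ 2 - 8 * X 0 * X 1 ^ 2 * X 2 + 4 * X 1 ^ 4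

lemma coeff_X1_mul_aux (m : Fin 4 →₀ ℕ) (hm : m 1 = 0) (f : MvPolynomial (Fin 4) k) :
    coeff m (X 1 * f) = 0 := by
  rw [coeff_X_mul']
  simp [Finsupp.mem_support_iff, hm]

lemma coeff_mono_aux (m : Fin 4 →₀ ℕ) (c : k) (e0 e2 e3 : ℕ) :
    coeff m (C c * (X 0 ^ e0 * X 2 ^ e2 * X 3 ^ e3) : MvPolynomial (Fin 4) k)
      = if (Finsupp.single 0 e0 + Finsupp.single 2 e2 + Finsupp.single 3 e3 : Fin 4 →₀ ℕ) = m
        then c else 0 := by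
  rw [X_pow_eq_monomial, X_pow_eq_monomial, X_pow_eq_monomial, monomial_mul, monomial_mul,
    coeff_C_mul, coeff_monomial]
  simp [mul_ite]

lemma finsupp_eq_expv_iff (e0 e2 e3 a b c d : ℕ) :
    (Finsupp.single 0 e0 + Finsupp.single 2 e2 + Finsupp.single 3 e3 : Fin 4 →₀ ℕ)
      = expv a b c d ↔ (e0 = a ∧ 0 = b ∧ e2 = c ∧ e3 = d) := by
  constructor
  · intro h
    have h0 := DFunLike.congr_fun h 0
    have h1 := DFunLike.congr_fun h 1
    have h2 := DFunLike.congr_fun h 2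
    have h3 := DFunLike.congr_fun h 3
    simp [expv, Finsupp.single_apply] at h0 h1 h2 h3
    exact ⟨h0, h1, h2, h3⟩
  · rintro ⟨rfl, rfl, rfl, rfl⟩
    ext x
    fin_cases x <;> simp [expv, Finsupp.single_apply]

lemma coeff_kappa_pow (n : ℕ) (m : Fin 4 →₀ ℕ) (hm : m 1 = 0) :
    coeff m ((kappaK k) ^ n) =
      ∑ i ∈ Finset.range (n+1), ∑ j ∈ Finset.range (n+1),
        (if (Finsupp.single 0 (2*i + (n-j)) + Finsupp.single 2 ((n-i) + 2*j)
             + Finsupp.single 3 ((n-i) + (n-j)) : Fin 4 →₀ ℕ) = m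
         then (4:k)^n * ((-1:k)^(n-i) * (n.choose i) * (n.choose j)) else 0) := by
  have hsplit : kappaK k = (4 * ((X 0^2 - X 2 * X 3) * (X 2^2 + X 0 * X 3)))
      + X 1 ^ 2 * (X 3^2 - 8 * X 0 * X 2 + 4 * X 1^2) := by
    unfold kappaK; ring
  set P : MvPolynomial (Fin 4) k := 4 * ((X 0^2 - X 2 * X 3) * (X 2^2 + X 0 * X 3)) with hP
  set Yp : MvPolynomial (Fin 4) k := X 1 ^ 2 * (X 3^2 - 8 * X 0 * X 2 + 4 * X 1^2) with hY
  rw [hsplit, add_pow, coeff_sum, Finset.sum_eq_single n]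
  · rw [Nat.sub_self, pow_zero, Nat.choose_self, Nat.cast_one, mul_one, mul_one]
    have hPn : P ^ n = C ((4:k)^n) * ((X 0^2 - X 2*X 3)^n * (X 2^2 + X 0*X 3)^n) := by
      rw [hP, mul_pow, mul_pow]
      congr 1
      rw [map_pow]
      congr 1
    rw [hPn, coeff_C_mul]
    have hAB : (X 0^2 - X 2*X 3 : MvPolynomial (Fin 4) k)^n * (X 2^2 + X 0*X 3)^n
        = ∑ i ∈ Finset.range (n+1), ∑ j ∈ Finset.range (n+1),
          ((X 0^2)^i * (-(X 2*X 3))^(n-i) * (n.choose i : MvPolynomial (Fin 4) k))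
            * ((X 2^2)^j * (X 0*X 3)^(n-j) * (n.choose j : MvPolynomial (Fin 4) k)) := by
      rw [sub_eq_add_neg, add_pow, add_pow, Finset.sum_mul_sum]
    rw [hAB, coeff_sum, Finset.mul_sum]
    refine Finset.sum_congr rfl fun i hi => ?_
    rw [coeff_sum, Finset.mul_sum]
    refine Finset.sum_congr rfl fun j hj => ?_
    have hterm : ((X 0^2)^i * (-(X 2*X 3))^(n-i) * (n.choose i : MvPolynomial (Fin 4) k))
          * ((X 2^2)^j * (X 0*X 3)^(n-j) * (n.choose j : MvPolynomial (Fin 4) k))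
        = C ((-1:k)^(n-i) * (n.choose i) * (n.choose j))
            * (X 0 ^ (2*i + (n-j)) * X 2 ^ ((n-i) + 2*j) * X 3 ^ ((n-i) + (n-j))) := by
      rw [neg_pow, map_mul, map_mul, map_pow, map_neg, map_one, ← C_eq_coe_nat, ← C_eq_coe_nat]
      ring
    rw [hterm, coeff_mono_aux, mul_ite, mul_zero]
  · intro s hs hsn
    have hslt : s < n := lt_of_le_of_ne (Nat.lt_succ_iff.mp (Finset.mem_range.mp hs)) hsn
    obtain ⟨t, ht⟩ : ∃ t, n - s = t + 1 := ⟨n - s - 1, by omega⟩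
    rw [ht, pow_succ]
    have hx : P ^ s * (Yp ^ t * Yp) * ((n.choose s : ℕ) : MvPolynomial (Fin 4) k)
        = X 1 * (X 1 * (P ^ s * Yp ^ t * (X 3^2 - 8 * X 0 * X 2 + 4 * X 1^2)
            * ((n.choose s : ℕ) : MvPolynomial (Fin 4) k))) := by
      rw [hY]; ring
    rw [hx, coeff_X1_mul_aux k m hm]
  · intro h
    exact absurd (Finset.self_mem_range_succ n) h

lemma collapse_aux {β : Type*} [AddCommMonoid β] (n i₀ j₀ : ℕ) (hi : i₀ < n+1) (hj : j₀ < n+1)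
    (P : ℕ → ℕ → Prop) [∀ i j, Decidable (P i j)] (v : ℕ → ℕ → β)
    (h : ∀ i j, i < n+1 → j < n+1 → (P i j ↔ (j = j₀ ∧ i = i₀))) :
    (∑ i ∈ Finset.range (n+1), ∑ j ∈ Finset.range (n+1), if P i j then v i j else 0)
      = v i₀ j₀ := by
  rw [Finset.sum_congr rfl fun i hi' => Finset.sum_congr rfl fun j hj' =>
    if_congr (h i j (Finset.mem_range.mp hi') (Finset.mem_range.mp hj')) rfl rfl]
  simp [ite_and, Finset.sum_ite_eq', hi, hj]

/-- For `p ≡ 5 (mod 6)` prime and `k` of characteristic `p`, the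
coefficients of `X₁^{p−2}X₃^{2p−1}X₄^{p−1}` and of `X₁^{2p−1}X₃^{p−2}X₄^{p−1}` in
`κ^{p−1}` both equal `−4^{2p−2}` in `k`. -/
theorem stmt4 (p : ℕ) (hp : p.Prime) (hp5 : p % 6 = 5) [CharP k p] :
    coeff (expv (p - 2) 0 (2 * p - 1) (p - 1)) ((kappaK k) ^ (p - 1)) =
      -((4 : k) ^ (2 * p - 2)) ∧
    coeff (expv (2 * p - 1) 0 (p - 2) (p - 1)) ((kappaK k) ^ (p - 1)) =
      -((4 : k) ^ (2 * p - 2)) := by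
  haveI := Fact.mk hp
  obtain ⟨q, hq⟩ : ∃ q, p = 6*q+5 := ⟨p/6, by omega⟩
  have h4ne : (4:k) ≠ 0 := by
    have : ((4:ℕ):k) ≠ 0 := by
      rw [Ne, CharP.cast_eq_zero_iff k p]
      intro hd
      exact absurd (Nat.le_of_dvd (by norm_num) hd) (by omega)
    simpa using this
  have hfrob : (4:k)^p = 4 := by
    have := map_natCast (frobenius k p) 4
    simpa [frobenius_def] using this
  have h4 : (4:k)^(p-1) = 1 := by
    have hmul : (4:k)^(p-1) * 4 = 1 * 4 := by
      rw [← pow_succ, show p - 1 + 1 = p by omega, hfrob, one_mul]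
    exact mul_right_cancel₀ h4ne hmul
  have hchoose : ∀ i : ℕ, i ≤ p - 1 → (((p-1).choose i : ℕ) : k) = (-1:k)^i := by
    intro i
    induction i with
    | zero => intro _; simp
    | succ i ih =>
      intro h
      have hpas : ((p-1)+1).choose (i+1) = (p-1).choose i + (p-1).choose (i+1) :=
        Nat.choose_succ_succ _ _
      rw [show p - 1 + 1 = p by omega] at hpas
      have hz : ((p.choose (i+1) : ℕ) : k) = 0 := by
        rw [CharP.cast_eq_zero_iff k p]
        exact hp.dvd_choose_self (Nat.succ_ne_zero i) (by omega)
      rw [hpas, Nat.cast_add, ih (by omega)] at hz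
      have h2 := eq_neg_of_add_eq_zero_right hz
      rw [h2, pow_succ]; ring
  have hrhs : -((4 : k) ^ (2 * p - 2)) = -1 := by
    rw [show 2 * p - 2 = (p-1) * 2 by omega, pow_mul, h4, one_pow]
  constructor
  · rw [coeff_kappa_pow k (p-1) _ (by simp [expv]), hrhs]
    rw [collapse_aux (p-1) (2*q+1) (4*q+3) (by omega) (by omega) _ _
      (fun i j hi hj => by rw [finsupp_eq_expv_iff]; omega)]
    rw [hchoose (2*q+1) (by omega), hchoose (4*q+3) (by omega), h4,
      show p - 1 - (2*q+1) = 4*q+3 by omega]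
    have ho : Odd (4*q+3) := ⟨2*q+1, by ring⟩
    have ho2 : Odd (2*q+1) := ⟨q, by ring⟩
    simp [ho.neg_one_pow, ho2.neg_one_pow]
  · rw [coeff_kappa_pow k (p-1) _ (by simp [expv]), hrhs]
    rw [collapse_aux (p-1) (4*q+3) (2*q+1) (by omega) (by omega) _ _
      (fun i j hi hj => by rw [finsupp_eq_expv_iff]; omega)]
    rw [hchoose (2*q+1) (by omega), hchoose (4*q+3) (by omega), h4,
      show p - 1 - (4*q+3) = 2*q+1 by omega]
    have ho : Odd (4*q+3) := ⟨2*q+1, by ring⟩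
    have ho2 : Odd (2*q+1) := ⟨q, by ring⟩
    simp [ho.neg_one_pow, ho2.neg_one_pow]

end Stmt4
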